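/- The map X ↦ A·X + X·B on m×n complex matrices is a bijective linear map if and only if for all eigenvalues λ of A and μ of B we have λ + μ ≠ 0. -/

import Mathlib

open Polynomial Matrix

private lemma charpoly_eval_aux {k : ℕ} (M : Matrix (Fin k) (Fin k) ℂ) (t : ℂ) :
    M.charpoly.eval t = (t • (1 : Matrix (Fin k) (Fin k) ℂ) - M).det := by
  rw [Matrix.charpoly, eval_det, matPolyEquiv_charmatrix]
  congr 1
  simp only [eval_sub, eval_X, eval_C]
  congr 1
  ext i j
  simp [Matrix.scalar, Matrix.smul_apply, Matrix.one_apply, Matrix.diagonal_apply]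

/-- The linear map `X ↦ A·X + X·B` on `m×n` complex matrices is bijective iff
for all eigenvalues `λ` of `A` and `μ` of `B` we have `λ + μ ≠ 0`. -/
theorem sylvester_bijective_iff {m n : ℕ}
    (A : Matrix (Fin m) (Fin m) ℂ) (B : Matrix (Fin n) (Fin n) ℂ) :
    Function.Bijective (fun X : Matrix (Fin m) (Fin n) ℂ => A * X + X * B) ↔
    ∀ lam μ : ℂ, A.charpoly.IsRoot lam → B.charpoly.IsRoot μ → lam + μ ≠ 0 := by
  classical
  constructor
  · rintro hbij lam μ hlam hμ hsum
    have hdetA : (lam • (1 : Matrix (Fin m) (Fin m) ℂ) - A).det = 0 := by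
      rw [← charpoly_eval_aux]; exact hlam
    obtain ⟨v, hv0, hv⟩ := Matrix.exists_mulVec_eq_zero_iff.2 hdetA
    have hdetB : (μ • (1 : Matrix (Fin n) (Fin n) ℂ) - B).det = 0 := by
      rw [← charpoly_eval_aux]; exact hμ
    obtain ⟨w, hw0, hw⟩ := Matrix.exists_vecMul_eq_zero_iff.2 hdetB
    have hAv : A *ᵥ v = lam • v := by
      have h1 := hv
      rw [Matrix.sub_mulVec, Matrix.smul_mulVec, Matrix.one_mulVec, sub_eq_zero] at h1
      exact h1.symm
    have hwB : w ᵥ* B = μ • w := by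
      have h1 := hw
      rw [Matrix.vecMul_sub, sub_eq_zero] at h1
      have h2 : w ᵥ* (μ • (1 : Matrix (Fin n) (Fin n) ℂ)) = μ • w := by
        ext j; simp [Matrix.vecMul, dotProduct, Matrix.one_apply, mul_comm]
      rw [h2] at h1
      exact h1.symm
    set X : Matrix (Fin m) (Fin n) ℂ := Matrix.vecMulVec v w with hX
    have hmap : A * X + X * B = 0 := by
      ext i j
      have h1 : (A * X) i j = (A *ᵥ v) i * w j := by
        simp [hX, Matrix.mul_apply, Matrix.vecMulVec_apply, Matrix.mulVec, dotProduct,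
          Finset.sum_mul, mul_assoc]
      have h2 : (X * B) i j = v i * (w ᵥ* B) j := by
        simp [hX, Matrix.mul_apply, Matrix.vecMulVec_apply, Matrix.vecMul, dotProduct,
          Finset.mul_sum, mul_assoc]
      have : (A * X + X * B) i j = (lam + μ) * (v i * w j) := by
        rw [Matrix.add_apply, h1, h2, hAv, hwB]
        simp [Pi.smul_apply, smul_eq_mul]; ring
      rw [this, hsum, zero_mul, Matrix.zero_apply]
    have hX0 : X = 0 := by
      apply hbij.injective
      show A * X + X * B = A * 0 + 0 * B
      rw [hmap]; simp
    obtain ⟨i, hi⟩ := Function.ne_iff.1 hv0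
    obtain ⟨j, hj⟩ := Function.ne_iff.1 hw0
    have : X i j = 0 := by rw [hX0]; rfl
    rw [hX, Matrix.vecMulVec_apply] at this
    exact (mul_ne_zero hi hj) this
  · intro h
    -- key: the only solution of A*X + X*B = 0 is X = 0
    have key : ∀ X : Matrix (Fin m) (Fin n) ℂ, A * X + X * B = 0 → X = 0 := by
      intro X hX
      have hAX : A * X = X * (-B) := by
        rw [Matrix.mul_neg]
        exact eq_neg_of_add_eq_zero_left hX
      have hpow : ∀ k : ℕ, A ^ k * X = X * (-B) ^ k := by
        intro k
        induction k with
        | zero => simp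
        | succ k ih =>
          rw [pow_succ', pow_succ', Matrix.mul_assoc, ih, ← Matrix.mul_assoc, hAX,
            Matrix.mul_assoc]
      have hcomm : ∀ p : ℂ[X], (aeval A p) * X = X * (aeval (-B) p) := by
        intro p
        induction p using Polynomial.induction_on' with
        | add p q hp hq => rw [map_add, map_add, Matrix.add_mul, Matrix.mul_add, hp, hq]
        | monomial k a =>
          rw [aeval_monomial, aeval_monomial, Algebra.algebraMap_eq_smul_one,
            Algebra.algebraMap_eq_smul_one]
          simp only [Matrix.smul_mul, Matrix.mul_smul, one_mul]
          rw [hpow]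
      have hXp : X * (aeval (-B) A.charpoly) = 0 := by
        rw [← hcomm, Matrix.aeval_self_charpoly, Matrix.zero_mul]
      -- coprimality of A.charpoly and (-B).charpoly
      have hcop : IsCoprime A.charpoly ((-B).charpoly) := by
        by_contra hc
        have hgu : ¬ IsUnit (EuclideanDomain.gcd A.charpoly ((-B).charpoly)) := by
          intro hu; exact hc (EuclideanDomain.gcd_isUnit_iff.1 hu)
        have hg0 : EuclideanDomain.gcd A.charpoly ((-B).charpoly) ≠ 0 := by
          intro h0
          have := EuclideanDomain.gcd_eq_zero_iff.1 h0
          exact (A.charpoly_monic.ne_zero) this.1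
        have hdeg : (EuclideanDomain.gcd A.charpoly ((-B).charpoly)).degree ≠ 0 := by
          intro hd
          exact hgu (Polynomial.isUnit_iff_degree_eq_zero.2 hd)
        obtain ⟨r, hr⟩ := IsAlgClosed.exists_root _ hdeg
        have hrA : A.charpoly.IsRoot r := hr.dvd (EuclideanDomain.gcd_dvd_left _ _)
        have hrB' : ((-B).charpoly).IsRoot r := hr.dvd (EuclideanDomain.gcd_dvd_right _ _)
        have h1 : ((r : ℂ) • (1 : Matrix (Fin n) (Fin n) ℂ) + B).det = 0 := by
          have := hrB'
          rw [IsRoot, charpoly_eval_aux, sub_neg_eq_add] at this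
          exact this
        have hrB : B.charpoly.IsRoot (-r) := by
          rw [IsRoot, charpoly_eval_aux]
          have h2 : (-r) • (1 : Matrix (Fin n) (Fin n) ℂ) - B
              = -((r : ℂ) • (1 : Matrix (Fin n) (Fin n) ℂ) + B) := by
            rw [neg_smul, sub_eq_add_neg, ← neg_add]
          rw [h2, Matrix.det_neg, h1, mul_zero]
        exact h r (-r) hrA hrB (by ring)
      obtain ⟨u, vp, huv⟩ := hcop
      have haev : aeval (-B) u * aeval (-B) A.charpoly = 1 := by
        have := congrArg (aeval (-B)) huv
        rw [map_add, _root_.map_mul, _root_.map_mul, Matrix.aeval_self_charpoly, mul_zero, add_zero,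
          _root_.map_one] at this
        exact this
      have hcm : aeval (-B) A.charpoly * aeval (-B) u = 1 := by
        rw [← _root_.map_mul, mul_comm, _root_.map_mul, haev]
      calc X = X * (aeval (-B) A.charpoly * aeval (-B) u) := by rw [hcm, Matrix.mul_one]
        _ = (X * aeval (-B) A.charpoly) * aeval (-B) u := by rw [Matrix.mul_assoc]
        _ = 0 := by rw [hXp, Matrix.zero_mul]
    -- package as a linear map and use finite-dimensionality
    let L : Matrix (Fin m) (Fin n) ℂ →ₗ[ℂ] Matrix (Fin m) (Fin n) ℂ :=
      { toFun := fun X => A * X + X * B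
        map_add' := by intro X Y; simp [Matrix.mul_add, Matrix.add_mul]; abel
        map_smul' := by intro c X; simp [Matrix.mul_smul, Matrix.smul_mul, smul_add] }
    have hinj : Function.Injective L := by
      rw [injective_iff_map_eq_zero']
      intro X
      constructor
      · intro hX
        exact key X hX
      · intro hX; rw [hX]; exact map_zero L
    exact ⟨hinj, LinearMap.injective_iff_surjective.1 hinj⟩
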